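/- For all natural numbers k, l1, l2, l3, l' with k ≥ 4, 1 ≤ l1 + l2 + l3 + l' ≤ k, l' ≤ k − 1, and l1 ≤ k − l', the following strict inequality holds in the integers: k · 2^{k+1} · (2^{k+1} − 2) < 2^{l1+l2+l3+l'} · ( (k − l') · 2^{k+1−l2} · (2^{k+1−l3} − 1) − l1 · C(k+1−l2, ⌊(k+1−l2)/2⌋) · C(k+1−l3, ⌈(k+1−l3)/2⌉) ) + (2^{l1+l3+l'} − 1) · k · 2^{k+1}. -/

import Mathlib

lemma choose_le_two_pow' (m : ℕ) : ∀ i, (m+1).choose i ≤ 2^m := by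
  induction m with
  | zero => intro i; match i with
    | 0 => simp
    | 1 => simp
    | (j+2) => simp [Nat.choose_eq_zero_of_lt]
  | succ m ih =>
    intro i
    match i with
    | 0 => simp [Nat.one_le_two_pow]
    | (j+1) =>
      rw [Nat.choose_succ_succ, pow_succ, Nat.mul_two]
      exact Nat.add_le_add (ih j) (ih (j+1))

lemma key_xw (k l1 l' : ℕ) (hk : 4 ≤ k) (h1 : l1 + l' ≤ k) (h2 : l' + 1 ≤ k) :
    4 * (k:ℤ) ≤ 2^l1 * 2^l' * (4*(k:ℤ) - 4*(l':ℤ) - (l1:ℤ)) := by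
  have hx : (l1 + 1 : ℤ) ≤ 2^l1 := by exact_mod_cast Nat.succ_le_of_lt (Nat.lt_two_pow_self (n := l1))
  have hw : (l' + 1 : ℤ) ≤ 2^l' := by exact_mod_cast Nat.succ_le_of_lt (Nat.lt_two_pow_self (n := l'))
  have h1' : (l1:ℤ) + (l':ℤ) ≤ (k:ℤ) := by exact_mod_cast h1
  have h2' : (l':ℤ) + 1 ≤ (k:ℤ) := by exact_mod_cast h2
  have hk' : (4:ℤ) ≤ (k:ℤ) := by exact_mod_cast hk
  have ha : (0:ℤ) ≤ (l1:ℤ) := Int.natCast_nonneg l1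
  have hb : (0:ℤ) ≤ (l':ℤ) := Int.natCast_nonneg l'
  have hpos : (0:ℤ) ≤ 4*(k:ℤ) - 4*(l':ℤ) - (l1:ℤ) := by linarith
  have hP : ((l1:ℤ)+1)*((l':ℤ)+1) ≤ 2^l1 * 2^l' :=
    mul_le_mul hx hw (by linarith) (by positivity)
  have hmid : 4 * (k:ℤ) ≤ ((l1:ℤ)+1)*((l':ℤ)+1)*(4*(k:ℤ) - 4*(l':ℤ) - (l1:ℤ)) := by
    nlinarith [mul_nonneg ha (by linarith : (0:ℤ) ≤ 4*((k:ℤ)-(l':ℤ)) - 1 - (l1:ℤ)),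
      mul_nonneg hb (by linarith : (0:ℤ) ≤ (k:ℤ) - (l':ℤ) - 1),
      mul_nonneg (mul_nonneg ha hb) hpos,
      mul_nonneg (mul_nonneg hb ha) (by linarith : (0:ℤ) ≤ 4*((k:ℤ)-(l':ℤ)) - 1 - (l1:ℤ))]
  calc 4*(k:ℤ) ≤ ((l1:ℤ)+1)*((l':ℤ)+1)*(4*(k:ℤ) - 4*(l':ℤ) - (l1:ℤ)) := hmid
    _ ≤ 2^l1 * 2^l' * (4*(k:ℤ) - 4*(l':ℤ) - (l1:ℤ)) :=
      mul_le_mul_of_nonneg_right hP hpos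

lemma main_alg (K L1 L' Q x y z w u v Ca Cb : ℤ)
    (hK : 1 ≤ K) (hQ : 1 ≤ Q)
    (hx : 1 ≤ x) (hy : 1 ≤ y) (hz : 1 ≤ z) (hw : 1 ≤ w)
    (hL1 : 0 ≤ L1) (hL' : 0 ≤ L')
    (hCa : 0 ≤ Ca) (hCb : 0 ≤ Cb)
    (hyu : y * u = Q) (hzv : z * v = Q)
    (h2Ca : 2*Ca ≤ u) (h2Cb : 2*Cb ≤ v)
    (hxw : 4*K ≤ x*w*(4*K - 4*L' - L1)) :
    K*Q*(Q-2) < x*y*z*w*((K - L')*u*(v-1) - L1*Ca*Cb) + (x*z*w - 1)*K*Q := by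
  have hu : 0 ≤ u := le_trans (by positivity) h2Ca
  have hv : 0 ≤ v := le_trans (by positivity) h2Cb
  have hCaCb : 4*(Ca*Cb) ≤ u*v := by nlinarith [mul_le_mul h2Ca h2Cb (by positivity) hu]
  have f2 : x*y*z*w*(L1*(Ca*Cb))*4 ≤ L1*(x*w)*(Q*Q) := by
    have step : x*y*z*w*L1*(4*(Ca*Cb)) ≤ x*y*z*w*L1*(u*v) := by
      apply mul_le_mul_of_nonneg_left hCaCb
      positivity
    have e : x*y*z*w*L1*(u*v) = L1*(x*w)*((y*u)*(z*v)) := by ring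
    rw [e, hyu, hzv] at step
    linarith
  have e2 : x*y*z*w*((K-L')*u*(v-1)) = (K-L')*(x*w)*((y*u)*(z*v)) - (K-L')*(x*(z*w))*(y*u) := by
    ring
  rw [hyu, hzv] at e2
  have f1 : 4*K*(Q*Q) ≤ x*w*(4*K - 4*L' - L1)*(Q*Q) :=
    mul_le_mul_of_nonneg_right hxw (by positivity)
  have f3 : 0 ≤ L'*(x*(z*w))*Q := by positivity
  have f4 : 0 < K*Q := by positivity
  nlinarith [f1, f2, f3, f4, e2]

lemma one_le_two_pow_int (n : ℕ) : (1:ℤ) ≤ 2^n := by exact_mod_cast Nat.one_le_two_pow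

theorem case_3_combined_increase (k l1 l2 l3 l' : ℕ) (hk : 4 ≤ k)
    (hge : 1 ≤ l1 + l2 + l3 + l') (hle : l1 + l2 + l3 + l' ≤ k)
    (hl' : l' ≤ k - 1) (hl1 : l1 ≤ k - l') :
    (k : ℤ) * 2 ^ (k + 1) * (2 ^ (k + 1) - 2) <
      2 ^ (l1 + l2 + l3 + l') *
        (((k : ℤ) - l') * 2 ^ (k + 1 - l2) * (2 ^ (k + 1 - l3) - 1) -
          (l1 : ℤ) * (Nat.choose (k + 1 - l2) ((k + 1 - l2) / 2) : ℤ) *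
            (Nat.choose (k + 1 - l3) ((k + 1 - l3 + 1) / 2) : ℤ)) +
      (2 ^ (l1 + l3 + l') - 1) * (k : ℤ) * 2 ^ (k + 1) := by
  obtain ⟨a, ha⟩ : ∃ a, k + 1 - l2 = a + 1 := ⟨k - l2, by omega⟩
  obtain ⟨b, hb⟩ : ∃ b, k + 1 - l3 = b + 1 := ⟨k - l3, by omega⟩
  have hs1 : (2:ℤ)^(l1+l2+l3+l') = 2^l1*2^l2*2^l3*2^l' := by
    rw [pow_add, pow_add, pow_add]
  have hs2 : (2:ℤ)^(l1+l3+l') = 2^l1*2^l3*2^l' := by rw [pow_add, pow_add]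
  rw [ha, hb, hs1, hs2]
  have hyu : (2:ℤ)^l2 * 2^(a+1) = 2^(k+1) := by rw [← pow_add]; congr 1; omega
  have hzv : (2:ℤ)^l3 * 2^(b+1) = 2^(k+1) := by rw [← pow_add]; congr 1; omega
  have hCa : 2*((Nat.choose (a+1) ((a+1)/2)):ℤ) ≤ 2^(a+1) := by
    have h : ((Nat.choose (a+1) ((a+1)/2)):ℤ) ≤ 2^a := by
      exact_mod_cast choose_le_two_pow' a ((a+1)/2)
    calc 2*((Nat.choose (a+1) ((a+1)/2)):ℤ) ≤ 2*2^a := by linarith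
      _ = 2^(a+1) := by ring
  have hCb : 2*((Nat.choose (b+1) ((b+1+1)/2)):ℤ) ≤ 2^(b+1) := by
    have h : ((Nat.choose (b+1) ((b+1+1)/2)):ℤ) ≤ 2^b := by
      exact_mod_cast choose_le_two_pow' b ((b+1+1)/2)
    calc 2*((Nat.choose (b+1) ((b+1+1)/2)):ℤ) ≤ 2*2^b := by linarith
      _ = 2^(b+1) := by ring
  have hxw : 4*(k:ℤ) ≤ 2^l1 * 2^l' * (4*(k:ℤ) - 4*(l':ℤ) - (l1:ℤ)) :=
    key_xw k l1 l' hk (by omega) (by omega)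
  exact main_alg (k:ℤ) (l1:ℤ) (l':ℤ) (2^(k+1)) (2^l1) (2^l2) (2^l3) (2^l')
    (2^(a+1)) (2^(b+1)) _ _
    (by exact_mod_cast hk.trans' (by norm_num)) (one_le_two_pow_int (k+1))
    (one_le_two_pow_int l1) (one_le_two_pow_int l2) (one_le_two_pow_int l3)
    (one_le_two_pow_int l') (Int.natCast_nonneg l1) (Int.natCast_nonneg l')
    (Int.natCast_nonneg _) (Int.natCast_nonneg _)
    hyu hzv hCa hCb hxw
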